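/- Let B_0,…,B_n ∈ 𝓕 be conditionally independent given 𝓖, set W := Σ_{j=0}^{n} 1_{B_j}, W_i := Σ_{j≠i} 1_{B_j}, and let H be a nonnegative version of E[W|𝓖]. Then for every A ⊆ ℕ, every k ∈ ℕ and every i ∈ {0,…,n}: E[ 1_{B_i}·g(W_i+k, H, A) | 𝓖 ] = ℙ[B_i|𝓖]·E[ g(W_i+k, H, A) | 𝓖 ] almost everywhere, and E[ 1_{B_i}·g(W+k, H, A) | 𝓖 ] = ℙ[B_i|𝓖]·E[ g(W_i+k+1, H, A) | 𝓖 ] almost everywhere, where g is evaluated pointwise in its first two arguments. -/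

import Mathlib

open scoped BigOperators

/-- Poisson pmf: Po(k;lam) = lam^k * e^(-lam) / k!  (with the convention 0^0 = 1). -/
noncomputable def Po (k : ℕ) (lam : ℝ) : ℝ := lam ^ k * Real.exp (-lam) / (Nat.factorial k)

/-- Poisson measure of a set A of naturals: Po(A;lam) = sum over k in A of Po(k;lam). -/
noncomputable def PoSet (A : Set ℕ) (lam : ℝ) : ℝ := ∑' k : A, Po k lam

/-- The scalar Stein-Chen solution g(j,lam,A), defined recursively by g(0,lam,A) = 0 and
g(j,lam,A) = lam⁻¹ * ((j-1)*g(j-1,lam,A) + 1_A(j-1) - Po(A;lam))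
             + (1/j) * 1_{lam=0} * (1_A(0) - 1_A(j)) for j ≥ 1,
with the convention 0⁻¹ = 0. -/
noncomputable def steinChen : ℕ → ℝ → Set ℕ → ℝ
  | 0, _, _ => 0
  | (j + 1), lam, A =>
      lam⁻¹ * ((j : ℝ) * steinChen j lam A
          + A.indicator (fun _ => (1 : ℝ)) j - PoSet A lam)
        + (1 / ((j : ℝ) + 1)) * (if lam = 0 then (1 : ℝ) else 0)
          * (A.indicator (fun _ => (1 : ℝ)) 0 - A.indicator (fun _ => (1 : ℝ)) (j + 1))

open MeasureTheory

namespace SteinChenAux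

lemma steinChen_closed (A : Set ℕ) {lam : ℝ} (hl : 0 < lam) (j : ℕ) :
    steinChen (j + 1) lam A = (Nat.factorial j : ℝ) / lam ^ (j + 1) *
      ∑ m ∈ Finset.range (j + 1),
        (A.indicator (fun _ => (1 : ℝ)) m - PoSet A lam) * (lam ^ m / (Nat.factorial m)) := by
  induction j with
  | zero =>
      simp only [steinChen, hl.ne', if_false, Finset.sum_range_one, Nat.cast_zero,
        Nat.factorial_zero, Nat.cast_one, pow_zero, pow_one, zero_mul, zero_add]
      field_simp
      ring
  | succ j ih =>
      have hfact : (0:ℝ) < (Nat.factorial j : ℝ) := by positivity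
      simp only [steinChen, hl.ne', if_false, mul_zero, zero_mul, add_zero] at ih ⊢
      have expand := Finset.sum_range_succ
        (fun m => (A.indicator (fun _ => (1 : ℝ)) m - PoSet A lam) * (lam ^ m / (Nat.factorial m)))
        (j + 1)
      rw [ih, expand]
      push_cast [Nat.factorial_succ]
      field_simp
      ring

lemma tsum_pow_div_factorial (lam : ℝ) :
    ∑' m : ℕ, lam ^ m / (Nat.factorial m) = Real.exp lam := by
  rw [Real.exp_eq_exp_ℝ, NormedSpace.exp_eq_tsum_div]

lemma poSet_eq (A : Set ℕ) (lam : ℝ) :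
    PoSet A lam = Real.exp (-lam)
      * ∑' k, A.indicator (fun m : ℕ => lam ^ m / (Nat.factorial m)) k := by
  rw [PoSet, tsum_subtype A (fun k => Po k lam), ← tsum_mul_left]
  congr 1; funext k
  by_cases hk : k ∈ A <;> simp [Set.indicator_apply, hk, Po] <;> ring

lemma steinChen_abs_le (A : Set ℕ) (j : ℕ) {lam : ℝ} (h0 : 0 ≤ lam) :
    |steinChen j lam A| ≤ Real.exp lam := by
  match j with
  | 0 => simpa [steinChen] using Real.exp_nonneg lam
  | (j+1) =>
    rcases h0.eq_or_lt with h | hl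
    · -- lam = 0
      subst h
      have hd : |A.indicator (fun _ => (1:ℝ)) 0 - A.indicator (fun _ => (1:ℝ)) (j+1)| ≤ 1 := by
        by_cases h1 : (0:ℕ) ∈ A <;> by_cases h2 : (j+1) ∈ A <;>
          simp [Set.indicator_apply, h1, h2]
      have hj : |(1 : ℝ) / ((j:ℝ) + 1)| ≤ 1 := by
        rw [abs_of_nonneg (by positivity)]
        rw [div_le_one (by positivity)]
        simp [Nat.cast_nonneg]
      simp only [steinChen, inv_zero, zero_mul, if_pos rfl, if_true, mul_one, zero_add, Real.exp_zero]
      calc |1 / ((j:ℝ) + 1) * (A.indicator (fun _ => (1:ℝ)) 0 - A.indicator (fun _ => (1:ℝ)) (j+1))|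
          = |(1:ℝ) / ((j:ℝ) + 1)| * |A.indicator (fun _ => (1:ℝ)) 0 - A.indicator (fun _ => (1:ℝ)) (j+1)| := abs_mul _ _
        _ ≤ 1 * 1 := by
            apply mul_le_mul hj hd (abs_nonneg _) zero_le_one
        _ = 1 := by ring
    · -- lam > 0
      set u : ℕ → ℝ := fun m => lam ^ m / (Nat.factorial m) with hu_def
      set v : ℕ → ℝ := fun m => A.indicator u m with hv_def
      have hu : Summable u := Real.summable_pow_div_factorial lam
      have hv : Summable v := hu.indicator A
      have hu0 : ∀ m, 0 ≤ u m := fun m => by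
        simp only [hu_def]; positivity
      have hv0 : ∀ m, 0 ≤ v m := fun m => Set.indicator_nonneg (fun m _ => hu0 m) m
      have hvu : ∀ m, v m ≤ u m := fun m => Set.indicator_le_self' (fun m _ => hu0 m) m
      set S1 : ℝ := ∑ m ∈ Finset.range (j+1), v m with hS1_def
      set S2 : ℝ := ∑ m ∈ Finset.range (j+1), u m with hS2_def
      set T1 : ℝ := ∑' i : ℕ, v (i + (j+1)) with hT1_def
      set T2 : ℝ := ∑' i : ℕ, u (i + (j+1)) with hT2_def
      have hu' : Summable (fun i => u (i + (j+1))) := (summable_nat_add_iff (j+1)).mpr hu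
      have hv' : Summable (fun i => v (i + (j+1))) := (summable_nat_add_iff (j+1)).mpr hv
      have hE : Real.exp lam = S2 + T2 := by
        rw [← tsum_pow_div_factorial lam, ← Summable.sum_add_tsum_nat_add (j+1) hu]
      have hPo : PoSet A lam = Real.exp (-lam) * (S1 + T1) := by
        rw [poSet_eq, ← Summable.sum_add_tsum_nat_add (j+1) hv]
      have h1 : Real.exp (-lam) * (S2 + T2) = 1 := by
        rw [← hE, ← Real.exp_add]; simp
      have hS1nn : 0 ≤ S1 := Finset.sum_nonneg (fun m _ => hv0 m)
      have hS12 : S1 ≤ S2 := Finset.sum_le_sum (fun m _ => hvu m)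
      have hS2nn : 0 ≤ S2 := Finset.sum_nonneg (fun m _ => hu0 m)
      have hT1nn : 0 ≤ T1 := tsum_nonneg (fun i => hv0 _)
      have hT12 : T1 ≤ T2 := Summable.tsum_le_tsum (fun i => hvu _) hv' hu'
      have hT2nn : 0 ≤ T2 := tsum_nonneg (fun i => hu0 _)
      -- key identity
      have hkey : S1 - PoSet A lam * S2 = Real.exp (-lam) * (S1 * T2 - T1 * S2) := by
        linear_combination (-S2) * hPo + (-S1) * h1
      -- the sum in closed form
      have hS : (∑ m ∈ Finset.range (j + 1),
          (A.indicator (fun _ => (1 : ℝ)) m - PoSet A lam) * (lam ^ m / (Nat.factorial m)))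
          = S1 - PoSet A lam * S2 := by
        rw [hS1_def, hS2_def, Finset.mul_sum, ← Finset.sum_sub_distrib]
        refine Finset.sum_congr rfl (fun m _ => ?_)
        by_cases hm : m ∈ A <;> simp [Set.indicator_apply, hm, hv_def, hu_def] <;> ring
      -- T2 bound
      have hc : T2 ≤ lam ^ (j+1) / (Nat.factorial (j+1)) * Real.exp lam := by
        have hterm : ∀ i : ℕ, u (i + (j+1)) ≤ lam ^ (j+1) / (Nat.factorial (j+1)) * u i := by
          intro i
          have hdvd : (Nat.factorial i * Nat.factorial (j+1) : ℕ) ≤ Nat.factorial (i + (j+1)) :=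
            Nat.le_of_dvd (Nat.factorial_pos _) (Nat.factorial_mul_factorial_dvd_factorial_add i (j+1))
          have hfpos : (0:ℝ) < (Nat.factorial i : ℝ) * (Nat.factorial (j+1) : ℝ) := by positivity
          have : (lam ^ (i + (j+1))) / (Nat.factorial (i + (j+1)) : ℝ)
              ≤ (lam ^ (i + (j+1))) / ((Nat.factorial i : ℝ) * (Nat.factorial (j+1) : ℝ)) := by
            apply div_le_div_of_nonneg_left (by positivity) hfpos
            exact_mod_cast hdvd
          calc u (i + (j+1)) = (lam ^ (i + (j+1))) / (Nat.factorial (i + (j+1)) : ℝ) := rfl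
            _ ≤ (lam ^ (i + (j+1))) / ((Nat.factorial i : ℝ) * (Nat.factorial (j+1) : ℝ)) := this
            _ = lam ^ (j+1) / (Nat.factorial (j+1)) * u i := by
                rw [pow_add, hu_def]; field_simp
        calc T2 ≤ ∑' i : ℕ, lam ^ (j+1) / (Nat.factorial (j+1)) * u i :=
              Summable.tsum_le_tsum hterm hu' (hu.mul_left _)
          _ = lam ^ (j+1) / (Nat.factorial (j+1)) * Real.exp lam := by
              rw [tsum_mul_left, hu_def, tsum_pow_div_factorial]
      have hS2E : S2 ≤ Real.exp lam := by rw [hE]; linarith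
      -- assemble
      rw [steinChen_closed A hl j, hS, hkey]
      have habs : |S1 * T2 - T1 * S2| ≤ S2 * T2 := by
        rw [abs_sub_le_iff]
        constructor <;> nlinarith
      have hepos : (0:ℝ) < Real.exp (-lam) := Real.exp_pos _
      have hfborder : (0:ℝ) ≤ (Nat.factorial j : ℝ) / lam ^ (j+1) := by positivity
      rw [abs_mul, abs_mul, abs_of_nonneg hfborder, abs_of_pos hepos]
      have step1 : (Nat.factorial j : ℝ) / lam ^ (j+1) * (Real.exp (-lam) * |S1 * T2 - T1 * S2|)
          ≤ (Nat.factorial j : ℝ) / lam ^ (j+1) * (Real.exp (-lam) * (S2 * T2)) := by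
        apply mul_le_mul_of_nonneg_left _ hfborder
        exact mul_le_mul_of_nonneg_left habs hepos.le
      refine step1.trans ?_
      have step2 : Real.exp (-lam) * (S2 * T2)
          ≤ lam ^ (j+1) / (Nat.factorial (j+1)) * Real.exp lam := by
        have : S2 * T2 ≤ Real.exp lam * (lam ^ (j+1) / (Nat.factorial (j+1)) * Real.exp lam) := by
          apply mul_le_mul hS2E hc hT2nn (Real.exp_nonneg _)
        calc Real.exp (-lam) * (S2 * T2)
            ≤ Real.exp (-lam) * (Real.exp lam * (lam ^ (j+1) / (Nat.factorial (j+1)) * Real.exp lam)) :=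
              mul_le_mul_of_nonneg_left this hepos.le
          _ = (Real.exp (-lam) * Real.exp lam) * (lam ^ (j+1) / (Nat.factorial (j+1)) * Real.exp lam) := by ring
          _ = lam ^ (j+1) / (Nat.factorial (j+1)) * Real.exp lam := by
              rw [← Real.exp_add]; simp
      have step3 : (Nat.factorial j : ℝ) / lam ^ (j+1) * (Real.exp (-lam) * (S2 * T2))
          ≤ (Nat.factorial j : ℝ) / lam ^ (j+1) * (lam ^ (j+1) / (Nat.factorial (j+1)) * Real.exp lam) :=
        mul_le_mul_of_nonneg_left step2 hfborder
      refine step3.trans ?_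
      have heq : (Nat.factorial j : ℝ) / lam ^ (j+1) * (lam ^ (j+1) / (Nat.factorial (j+1)) * Real.exp lam)
          = ((Nat.factorial j : ℝ) / (Nat.factorial (j+1))) * Real.exp lam := by
        field_simp
      rw [heq]
      have hle1 : ((Nat.factorial j : ℝ) / (Nat.factorial (j+1))) ≤ 1 := by
        rw [div_le_one (by positivity)]
        exact_mod_cast Nat.factorial_le (Nat.le_succ j)
      nlinarith [Real.exp_nonneg lam]

lemma measurable_poSet (A : Set ℕ) : Measurable (fun lam : ℝ => PoSet A lam) := by
  have heq : (fun lam : ℝ => PoSet A lam)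
      = fun lam => Real.exp (-lam)
          * ∑' k, A.indicator (fun m : ℕ => lam ^ m / (Nat.factorial m)) k := by
    funext lam; rw [poSet_eq]
  rw [heq]
  refine Measurable.mul (Real.measurable_exp.comp measurable_neg) ?_
  refine measurable_of_tendsto_metrizable
    (f := fun N (lam : ℝ) => ∑ k ∈ Finset.range N,
      A.indicator (fun m : ℕ => lam ^ m / (Nat.factorial m)) k)
    (g := fun lam : ℝ => ∑' k, A.indicator (fun m : ℕ => lam ^ m / (Nat.factorial m)) k) ?_ ?_
  · intro N
    refine Finset.measurable_sum _ (fun k _ => ?_)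
    by_cases hk : k ∈ A
    · simp only [Set.indicator_of_mem hk]
      exact (measurable_id.pow_const k).div_const _
    · simp [Set.indicator_of_notMem hk]
  · rw [tendsto_pi_nhds]
    intro lam
    exact ((Real.summable_pow_div_factorial lam).indicator A).hasSum.tendsto_sum_nat

lemma measurable_steinChen (j : ℕ) (A : Set ℕ) :
    Measurable (fun lam : ℝ => steinChen j lam A) := by
  induction j with
  | zero => simpa [steinChen] using measurable_const
  | succ j ih =>
      simp only [steinChen]
      apply Measurable.add
      · apply Measurable.mul measurable_inv
        apply Measurable.sub
        · exact (measurable_const.mul ih).add measurable_const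
        · exact measurable_poSet A
      · apply Measurable.mul
        · apply Measurable.mul measurable_const
          exact Measurable.ite (measurableSet_singleton (0:ℝ) : MeasurableSet {x : ℝ | x = 0})
            measurable_const measurable_const
        · exact measurable_const

end SteinChenAux

open SteinChenAux

/-- Scalar instance of Lemma 4.10: for events B_0,...,B_n conditionally independent
given 𝓖, W = Σ_j 1_{B_j}, W_i = Σ_{j≠i} 1_{B_j}, and H a nonnegative version of
E[W|𝓖]: for every A ⊆ ℕ, k ∈ ℕ and i,
E[1_{B_i} * g(W_i+k, H, A) | 𝓖] = P[B_i|𝓖] * E[g(W_i+k, H, A) | 𝓖]  a.e., and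
E[1_{B_i} * g(W+k, H, A) | 𝓖] = P[B_i|𝓖] * E[g(W_i+k+1, H, A) | 𝓖]  a.e. -/


theorem condexp_steinChen_condIndep
    {Ω : Type*} (𝓖 : MeasurableSpace Ω) [mΩ : MeasurableSpace Ω] [StandardBorelSpace Ω]
    (h𝓖 : 𝓖 ≤ mΩ)
    (μ : Measure Ω) [IsProbabilityMeasure μ]
    (n : ℕ) (B : Fin (n + 1) → Set Ω) (hBmeas : ∀ i, MeasurableSet (B i))
    (hBindep : ProbabilityTheory.iCondIndepSet 𝓖 h𝓖 B μ)
    (W : Ω → ℕ) (hW : W = fun ω => ∑ j, (B j).indicator (fun _ => (1 : ℕ)) ω)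
    (Wi : Fin (n + 1) → Ω → ℕ)
    (hWi : ∀ i, Wi i = fun ω => ∑ j ∈ Finset.univ.erase i,
      (B j).indicator (fun _ => (1 : ℕ)) ω)
    (H : Ω → ℝ) (hH0 : ∀ ω, 0 ≤ H ω)
    (hH : H =ᵐ[μ] μ[fun ω => (W ω : ℝ) | 𝓖])
    (A : Set ℕ) (k : ℕ) (i : Fin (n + 1)) :
    (μ[fun ω => (B i).indicator (fun _ => (1 : ℝ)) ω
        * steinChen (Wi i ω + k) (H ω) A | 𝓖]
      =ᵐ[μ]
    fun ω => (μ[(B i).indicator (fun _ => (1 : ℝ)) | 𝓖]) ω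
        * (μ[fun ω' => steinChen (Wi i ω' + k) (H ω') A | 𝓖]) ω) ∧
    (μ[fun ω => (B i).indicator (fun _ => (1 : ℝ)) ω
        * steinChen (W ω + k) (H ω) A | 𝓖]
      =ᵐ[μ]
    fun ω => (μ[(B i).indicator (fun _ => (1 : ℝ)) | 𝓖]) ω
        * (μ[fun ω' => steinChen (Wi i ω' + k + 1) (H ω') A | 𝓖]) ω) := by
  classical
  set H' : Ω → ℝ := μ[fun ω => (W ω : ℝ) | 𝓖] with hH'def
  -- basic measurability
  have hWmeas : Measurable W := by
    rw [hW]
    exact Finset.measurable_sum _ (fun j _ => measurable_const.indicator (hBmeas j))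
  have hWimeas : Measurable (Wi i) := by
    rw [hWi i]
    exact Finset.measurable_sum _ (fun j _ => measurable_const.indicator (hBmeas j))
  have hWile : ∀ ω, Wi i ω ≤ n := by
    intro ω
    rw [hWi i]
    calc ∑ j ∈ Finset.univ.erase i, (B j).indicator (fun _ => (1 : ℕ)) ω
        ≤ (Finset.univ.erase i).card • 1 := by
          refine Finset.sum_le_card_nsmul _ _ 1 (fun j _ => ?_)
          by_cases hj : ω ∈ B j <;> simp [Set.indicator_apply, hj]
      _ = n := by
          rw [smul_eq_mul, mul_one, Finset.card_erase_of_mem (Finset.mem_univ i)]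
          simp
  -- properties of H'
  have hH'sm : StronglyMeasurable[𝓖] H' := stronglyMeasurable_condExp
  have hWle : ∀ ω, (W ω : ℝ) ≤ (n : ℝ) + 1 := by
    intro ω
    have : W ω ≤ n + 1 := by
      rw [hW]
      calc ∑ j, (B j).indicator (fun _ => (1 : ℕ)) ω
          ≤ (Finset.univ : Finset (Fin (n+1))).card • 1 := by
            refine Finset.sum_le_card_nsmul _ _ 1 (fun j _ => ?_)
            by_cases hj : ω ∈ B j <;> simp [Set.indicator_apply, hj]
        _ = n + 1 := by simp
    exact_mod_cast this
  have hWint : Integrable (fun ω => (W ω : ℝ)) μ := by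
    refine Integrable.mono' (integrable_const ((n : ℝ) + 1))
      ((measurable_from_top.comp hWmeas : Measurable fun ω => (W ω : ℝ)).aestronglyMeasurable) ?_
    refine Filter.Eventually.of_forall (fun ω => ?_)
    rw [Real.norm_eq_abs, abs_of_nonneg (by positivity)]
    exact hWle ω
  have hH'nn : 0 ≤ᵐ[μ] H' :=
    condExp_nonneg (Filter.Eventually.of_forall (fun ω => by positivity))
  have hH'le : H' ≤ᵐ[μ] (fun _ => (n : ℝ) + 1) := by
    have h1 : μ[fun _ => (n : ℝ) + 1 | 𝓖] = fun _ => (n : ℝ) + 1 := condExp_const h𝓖 _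
    have h2 := condExp_mono (m := 𝓖) hWint (integrable_const ((n : ℝ) + 1))
      (Filter.Eventually.of_forall hWle)
    rw [h1] at h2
    exact h2
  -- conditional independence machinery
  have hgen_le : ∀ j, MeasurableSpace.generateFrom {B j} ≤ mΩ := fun j =>
    MeasurableSpace.generateFrom_le (by
      rintro t ht
      rw [Set.mem_singleton_iff] at ht
      rw [ht]
      exact hBmeas j)
  have hici : ProbabilityTheory.iCondIndep 𝓖 h𝓖
      (fun j => MeasurableSpace.generateFrom {B j}) μ :=
    (ProbabilityTheory.iCondIndepSet_iff_iCondIndep 𝓖 h𝓖 B μ).mp hBindep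
  have hm1_le : (⨆ j ∈ ({i} : Set (Fin (n+1))), MeasurableSpace.generateFrom {B j}) ≤ mΩ :=
    iSup₂_le fun j _ => hgen_le j
  have hm2_le : (⨆ j ∈ ({i}ᶜ : Set (Fin (n+1))), MeasurableSpace.generateFrom {B j}) ≤ mΩ :=
    iSup₂_le fun j _ => hgen_le j
  have hCI := ProbabilityTheory.condIndep_iSup_of_disjoint hgen_le hici
    (S := ({i} : Set (Fin (n+1)))) (T := ({i}ᶜ : Set (Fin (n+1)))) disjoint_compl_right
  have hfac0 := (ProbabilityTheory.condIndep_iff 𝓖 _ _ h𝓖 hm1_le hm2_le μ).mp hCI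
  set D : ℕ → Set Ω := fun m => Wi i ⁻¹' {m} with hD_def
  have hDmeas : ∀ m, MeasurableSet (D m) := fun m => hWimeas (measurableSet_singleton m)
  have hBi_m1 : MeasurableSet[⨆ j ∈ ({i} : Set (Fin (n+1))),
      MeasurableSpace.generateFrom {B j}] (B i) := by
    have h1 : MeasurableSet[MeasurableSpace.generateFrom {B i}] (B i) :=
      MeasurableSpace.measurableSet_generateFrom rfl
    exact (le_biSup (fun j => MeasurableSpace.generateFrom {B j}) (Set.mem_singleton i)) _ h1
  have hWi_m2 : Measurable[⨆ j ∈ ({i}ᶜ : Set (Fin (n+1))),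
      MeasurableSpace.generateFrom {B j}] (Wi i) := by
    rw [hWi i]
    refine Finset.measurable_sum _ (fun j hj => ?_)
    have hjne : j ∈ ({i}ᶜ : Set (Fin (n+1))) := by
      simp only [Set.mem_compl_iff, Set.mem_singleton_iff]
      exact Finset.ne_of_mem_erase hj
    have hBj : MeasurableSet[MeasurableSpace.generateFrom {B j}] (B j) :=
      MeasurableSpace.measurableSet_generateFrom rfl
    exact measurable_const.indicator
      ((le_biSup (fun j => MeasurableSpace.generateFrom {B j}) hjne) _ hBj)
  have hD_m2 : ∀ m, MeasurableSet[⨆ j ∈ ({i}ᶜ : Set (Fin (n+1))),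
      MeasurableSpace.generateFrom {B j}] (D m) := fun m =>
    hWi_m2 (measurableSet_singleton m)
  have hfac : ∀ m : ℕ, (μ[(B i ∩ D m).indicator (fun _ => (1:ℝ))|𝓖]) =ᵐ[μ]
      (μ[(B i).indicator (fun _ => (1:ℝ))|𝓖]) * (μ[(D m).indicator (fun _ => (1:ℝ))|𝓖]) :=
    fun m => hfac0 (B i) (D m) hBi_m1 (hD_m2 m)
  -- the key lemma
  have key : ∀ k' : ℕ,
      μ[fun ω => (B i).indicator (fun _ => (1 : ℝ)) ω * steinChen (Wi i ω + k') (H ω) A|𝓖]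
        =ᵐ[μ] fun ω => (μ[(B i).indicator (fun _ => (1 : ℝ))|𝓖]) ω
          * (μ[fun ω' => steinChen (Wi i ω' + k') (H ω') A|𝓖]) ω := by
    intro k'
    set c : ℕ → Ω → ℝ := fun m ω => steinChen (m + k') (H' ω) A with hc_def
    have hc_sm : ∀ m, StronglyMeasurable[𝓖] (c m) := fun m =>
      ((measurable_steinChen (m + k') A).comp hH'sm.measurable).stronglyMeasurable
    have hc_meas : ∀ m, Measurable (c m) := fun m =>
      (measurable_steinChen (m + k') A).comp (hH'sm.measurable.mono h𝓖 le_rfl)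
    have hc_bdd : ∀ m, ∀ᵐ ω ∂μ, |c m ω| ≤ Real.exp ((n : ℝ) + 1) := by
      intro m
      filter_upwards [hH'nn, hH'le] with ω h0 h1
      exact (steinChen_abs_le A (m + k') h0).trans (Real.exp_le_exp.mpr h1)
    have hint : ∀ {f : Ω → ℝ}, Measurable f →
        (∀ᵐ ω ∂μ, |f ω| ≤ Real.exp ((n : ℝ) + 1)) → Integrable f μ :=
      fun {f} hf hb => Integrable.mono' (integrable_const _) hf.aestronglyMeasurable
        (by simpa [Real.norm_eq_abs] using hb)
    have hc_int : ∀ m, Integrable (c m) μ := fun m => hint (hc_meas m) (hc_bdd m)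
    set g : ℕ → Ω → ℝ :=
      fun m ω => c m ω * (B i ∩ D m).indicator (fun _ => (1:ℝ)) ω with hg_def
    set g' : ℕ → Ω → ℝ :=
      fun m ω => c m ω * (D m).indicator (fun _ => (1:ℝ)) ω with hg'_def
    have habs_ind : ∀ (s : Set Ω) (ω : Ω), |s.indicator (fun _ => (1:ℝ)) ω| ≤ 1 := by
      intro s ω
      by_cases hω : ω ∈ s <;> simp [Set.indicator_apply, hω]
    have hg_meas : ∀ m, Measurable (g m) := fun m =>
      (hc_meas m).mul (measurable_const.indicator ((hBmeas i).inter (hDmeas m)))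
    have hg'_meas : ∀ m, Measurable (g' m) := fun m =>
      (hc_meas m).mul (measurable_const.indicator (hDmeas m))
    have hg_bdd : ∀ m, ∀ᵐ ω ∂μ, |g m ω| ≤ Real.exp ((n : ℝ) + 1) := by
      intro m
      filter_upwards [hc_bdd m] with ω hc
      rw [hg_def, abs_mul]
      calc |c m ω| * |(B i ∩ D m).indicator (fun _ => (1:ℝ)) ω|
          ≤ Real.exp ((n : ℝ) + 1) * 1 :=
            mul_le_mul hc (habs_ind _ ω) (abs_nonneg _) (Real.exp_nonneg _)
        _ = Real.exp ((n : ℝ) + 1) := mul_one _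
    have hg'_bdd : ∀ m, ∀ᵐ ω ∂μ, |g' m ω| ≤ Real.exp ((n : ℝ) + 1) := by
      intro m
      filter_upwards [hc_bdd m] with ω hc
      rw [hg'_def, abs_mul]
      calc |c m ω| * |(D m).indicator (fun _ => (1:ℝ)) ω|
          ≤ Real.exp ((n : ℝ) + 1) * 1 :=
            mul_le_mul hc (habs_ind _ ω) (abs_nonneg _) (Real.exp_nonneg _)
        _ = Real.exp ((n : ℝ) + 1) := mul_one _
    have hg_int : ∀ m, Integrable (g m) μ := fun m => hint (hg_meas m) (hg_bdd m)
    have hg'_int : ∀ m, Integrable (g' m) μ := fun m => hint (hg'_meas m) (hg'_bdd m)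
    -- decompositions
    have hdecomp' : ∀ ω, steinChen (Wi i ω + k') (H' ω) A
        = ∑ m ∈ Finset.range (n+1), g' m ω := by
      intro ω
      rw [Finset.sum_eq_single_of_mem (Wi i ω)
        (Finset.mem_range.mpr (Nat.lt_succ_of_le (hWile ω)))]
      · simp [hg'_def, hc_def, hD_def, Set.indicator_apply]
      · intro b _ hb
        have : ω ∉ D b := by
          simp only [hD_def, Set.mem_preimage, Set.mem_singleton_iff]
          exact fun h => hb (h ▸ rfl)
        simp [hg'_def, Set.indicator_of_notMem this]
    have hdecomp : ∀ ω, (B i).indicator (fun _ => (1:ℝ)) ω * steinChen (Wi i ω + k') (H' ω) A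
        = ∑ m ∈ Finset.range (n+1), g m ω := by
      intro ω
      by_cases hω : ω ∈ B i
      · rw [Set.indicator_of_mem hω, one_mul, hdecomp' ω]
        refine Finset.sum_congr rfl (fun m _ => ?_)
        by_cases hω2 : ω ∈ D m
        · simp [hg_def, hg'_def, Set.indicator_of_mem hω2,
            Set.indicator_of_mem (Set.mem_inter hω hω2)]
        · have hni : ω ∉ B i ∩ D m := fun h => hω2 h.2
          simp [hg_def, hg'_def, Set.indicator_of_notMem hω2,
            Set.indicator_of_notMem hni]
      · rw [Set.indicator_of_notMem hω, zero_mul]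
        symm
        refine Finset.sum_eq_zero (fun m _ => ?_)
        have hni : ω ∉ B i ∩ D m := fun h => hω h.1
        simp [hg_def, Set.indicator_of_notMem hni]
    -- LHS chain
    have hLHS1 : (fun ω => (B i).indicator (fun _ => (1:ℝ)) ω * steinChen (Wi i ω + k') (H ω) A)
        =ᵐ[μ] (fun ω => ∑ m ∈ Finset.range (n+1), g m ω) := by
      filter_upwards [hH] with ω hω
      rw [hω]
      exact hdecomp ω
    have hsum_fun : (∑ m ∈ Finset.range (n+1), g m)
        = fun ω => ∑ m ∈ Finset.range (n+1), g m ω := by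
      funext ω; simp [Finset.sum_apply]
    have hLHS2 : μ[fun ω => (B i).indicator (fun _ => (1:ℝ)) ω
          * steinChen (Wi i ω + k') (H ω) A|𝓖]
        =ᵐ[μ] ∑ m ∈ Finset.range (n+1), μ[g m|𝓖] := by
      refine (condExp_congr_ae hLHS1).trans ?_
      rw [← hsum_fun]
      exact condExp_finsetSum (fun m _ => hg_int m) 𝓖
    have hpull : ∀ m, μ[g m|𝓖] =ᵐ[μ]
        fun ω => c m ω * (μ[(B i ∩ D m).indicator (fun _ => (1:ℝ))|𝓖]) ω := fun m =>
      condExp_mul_of_stronglyMeasurable_left (hc_sm m) (hg_int m)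
        ((integrable_const (1:ℝ)).indicator ((hBmeas i).inter (hDmeas m)))
    -- RHS chain
    have hRHS1 : (fun ω' => steinChen (Wi i ω' + k') (H ω') A)
        =ᵐ[μ] (fun ω => ∑ m ∈ Finset.range (n+1), g' m ω) := by
      filter_upwards [hH] with ω hω
      rw [hω]
      exact hdecomp' ω
    have hsum_fun' : (∑ m ∈ Finset.range (n+1), g' m)
        = fun ω => ∑ m ∈ Finset.range (n+1), g' m ω := by
      funext ω; simp [Finset.sum_apply]
    have hRHS2 : μ[fun ω' => steinChen (Wi i ω' + k') (H ω') A|𝓖]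
        =ᵐ[μ] ∑ m ∈ Finset.range (n+1), μ[g' m|𝓖] := by
      refine (condExp_congr_ae hRHS1).trans ?_
      rw [← hsum_fun']
      exact condExp_finsetSum (fun m _ => hg'_int m) 𝓖
    have hpull' : ∀ m, μ[g' m|𝓖] =ᵐ[μ]
        fun ω => c m ω * (μ[(D m).indicator (fun _ => (1:ℝ))|𝓖]) ω := fun m =>
      condExp_mul_of_stronglyMeasurable_left (hc_sm m) (hg'_int m)
        ((integrable_const (1:ℝ)).indicator (hDmeas m))
    -- gather countably many a.e. statements
    have hall : ∀ᵐ ω ∂μ, ∀ m : ℕ,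
        (μ[g m|𝓖]) ω = c m ω * (μ[(B i ∩ D m).indicator (fun _ => (1:ℝ))|𝓖]) ω :=
      ae_all_iff.mpr hpull
    have hall' : ∀ᵐ ω ∂μ, ∀ m : ℕ,
        (μ[g' m|𝓖]) ω = c m ω * (μ[(D m).indicator (fun _ => (1:ℝ))|𝓖]) ω :=
      ae_all_iff.mpr hpull'
    have hfacall : ∀ᵐ ω ∂μ, ∀ m : ℕ,
        (μ[(B i ∩ D m).indicator (fun _ => (1:ℝ))|𝓖]) ω
          = (μ[(B i).indicator (fun _ => (1:ℝ))|𝓖]) ω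
            * (μ[(D m).indicator (fun _ => (1:ℝ))|𝓖]) ω :=
      ae_all_iff.mpr hfac
    filter_upwards [hLHS2, hRHS2, hall, hall', hfacall] with ω h2 hr2 ha ha' hf
    rw [h2, Finset.sum_apply, hr2, Finset.sum_apply, Finset.mul_sum]
    refine Finset.sum_congr rfl (fun m _ => ?_)
    rw [ha m, ha' m, hf m]
    ring
  refine ⟨key k, ?_⟩
  have hfun : (fun ω => (B i).indicator (fun _ => (1 : ℝ)) ω * steinChen (W ω + k) (H ω) A)
      = (fun ω => (B i).indicator (fun _ => (1 : ℝ)) ω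
          * steinChen (Wi i ω + (k + 1)) (H ω) A) := by
    funext ω
    by_cases hω : ω ∈ B i
    · have hWeq : W ω = Wi i ω + 1 := by
        rw [hW, hWi i]
        simp only []
        rw [← Finset.sum_erase_add Finset.univ _ (Finset.mem_univ i)]
        congr 1
        simp [Set.indicator_of_mem hω]
      have harith : Wi i ω + 1 + k = Wi i ω + (k + 1) := by omega
      rw [hWeq, harith]
    · simp [Set.indicator_of_notMem hω]
  rw [hfun]
  exact key (k + 1)
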